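/- Let α : M → O be a prelog structure, i.e., a homomorphism of commutative monoids where O is the multiplicative monoid of a commutative ring, and let O^× denote the units of O. Define M^a = (M ⊕ O^×)/∼, the quotient of M × O^× by the congruence generated by (p, α(p)^{-1}) ∼ (1,1) for p ∈ α^{-1}(O^×), and define α^a(p,h) = h·α(p). Then α^a restricts to an isomorphism (α^a)^{-1}(O^×) → O^×; in particular (M^a, α^a) is a log structure. -/

import Mathlib

/-- The congruence on `M × Oˣ` generated by identifying `(p, α(p)⁻¹)` with `(1, 1)`
for all `p` with `α p` a unit; the quotient is the associated log structure `M^a` of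
the prelog structure `α : M →* O`. -/
def assocLogCon {M O : Type*} [CommMonoid M] [CommRing O] (α : M →* O) : Con (M × Oˣ) :=
  conGen (fun x y : M × Oˣ =>
    y = 1 ∧ ∃ (p : M) (h : IsUnit (α p)), x = (p, h.unit⁻¹))

/-- The structure map on `M × Oˣ`. -/
def assocLogMap {M O : Type*} [CommMonoid M] [CommRing O] (α : M →* O) : M × Oˣ →* O where
  toFun x := (x.2 : O) * α x.1
  map_one' := by simp
  map_mul' x y := by
    simp only [Prod.snd_mul, Units.val_mul, Prod.fst_mul, map_mul]
    ring

lemma assocLogCon_le_ker {M O : Type*} [CommMonoid M] [CommRing O] (α : M →* O) :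
    assocLogCon α ≤ Con.ker (assocLogMap α) := by
  apply Con.conGen_le.mpr
  rintro x y ⟨rfl, p, hp, rfl⟩
  show (assocLogMap α) _ = (assocLogMap α) 1
  simp only [assocLogMap, MonoidHom.coe_mk, OneHom.coe_mk, map_one]
  have := hp.unit_spec
  calc ((hp.unit⁻¹ : Oˣ) : O) * α p = ((hp.unit⁻¹ : Oˣ) : O) * hp.unit := by rw [this]
    _ = 1 := Units.inv_mul _

lemma assocLogCon_reduce {M O : Type*} [CommMonoid M] [CommRing O] (α : M →* O)
    (p : M) (h : Oˣ) (hp : IsUnit (α p)) :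
    Con.mk' (assocLogCon α) (p, h) = Con.mk' (assocLogCon α) (1, h * hp.unit) := by
  apply ((assocLogCon α).eq).mpr
  have hgen : (assocLogCon α) (p, hp.unit⁻¹) 1 :=
    ConGen.Rel.of _ _ ⟨rfl, p, hp, rfl⟩
  have := (assocLogCon α).mul hgen ((assocLogCon α).refl (1, h * hp.unit))
  simpa [mul_comm, mul_assoc, mul_left_comm] using this

/-- Let `α : M → O` be a prelog structure (a monoid homomorphism to the multiplicative
monoid of a commutative ring `O`).  On the quotient `M^a = (M ⊕ O^×)/∼` there is a
(well-defined) structure map `α^a` with `α^a(p, h) = h · α(p)`, and `α^a` restricts to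
a bijection from `(α^a)⁻¹(O^×)` onto `O^×`; in particular `(M^a, α^a)` is a log
structure. -/
theorem associated_prelog_is_log {M O : Type*} [CommMonoid M] [CommRing O] (α : M →* O) :
    ∃ αa : (assocLogCon α).Quotient →* O,
      (∀ (p : M) (h : Oˣ), αa (Con.mk' (assocLogCon α) (p, h)) = (h : O) * α p) ∧
      Set.BijOn αa (αa ⁻¹' {x : O | IsUnit x}) {x : O | IsUnit x} := by
  refine ⟨(assocLogCon α).lift (assocLogMap α) (assocLogCon_le_ker α), ?_, ?_, ?_, ?_⟩
  · intro p h; rfl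
  · intro x hx; exact hx
  · -- injectivity on preimage of units
    rintro x hx y hy hxy
    obtain ⟨⟨p, h⟩, rfl⟩ := Con.mk'_surjective x
    obtain ⟨⟨q, k⟩, rfl⟩ := Con.mk'_surjective y
    have hx' : IsUnit ((h : O) * α p) := hx
    have hy' : IsUnit ((k : O) * α q) := hy
    have hp : IsUnit (α p) := isUnit_of_mul_isUnit_right hx'
    have hq : IsUnit (α q) := isUnit_of_mul_isUnit_right hy'
    rw [assocLogCon_reduce α p h hp, assocLogCon_reduce α q k hq]
    have hxy' : (h : O) * α p = (k : O) * α q := hxy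
    have : h * hp.unit = k * hq.unit := by
      ext; simpa [hp.unit_spec, hq.unit_spec] using hxy'
    rw [this]
  · -- surjectivity
    rintro u hu
    refine ⟨Con.mk' (assocLogCon α) (1, hu.unit), ?_, ?_⟩
    · show IsUnit ((hu.unit : O) * α 1)
      simpa [hu.unit_spec] using hu
    · show ((hu.unit : O) * α 1) = u
      simp [hu.unit_spec]
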